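/- Let (X,μ,T) be an ergodic topological dynamical system. If (X,T) is μ-mean sensitive with sensitivity constant ε, then for μ-almost every x, μ(B^b_{ε/3}(x)) = 0, where B^b_r(x) is the r-ball in the Besicovitch pseudometric. -/

import Mathlib

open Filter Metric Set
open scoped Classical

noncomputable def lowerDensity (S : Set ℕ) : ℝ :=
  Filter.atTop.liminf (fun n => (((Finset.range (n + 1)).filter (fun i => i ∈ S)).card : ℝ) / (n + 1))

noncomputable def upperDensity (S : Set ℕ) : ℝ :=
  Filter.atTop.limsup (fun n => (((Finset.range (n + 1)).filter (fun i => i ∈ S)).card : ℝ) / (n + 1))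

noncomputable def besicovitch {X : Type*} [MetricSpace X] (T : X → X) (x y : X) : ℝ :=
  sInf {δ : ℝ | 0 < δ ∧ upperDensity {i : ℕ | δ < dist (T^[i] x) (T^[i] y)} < δ}

open MeasureTheory

namespace BesiAux

noncomputable def dens (S : Set ℕ) (n : ℕ) : ℝ :=
  (((Finset.range (n + 1)).filter (fun i => i ∈ S)).card : ℝ) / (n + 1)

lemma dens_nonneg (S : Set ℕ) (n : ℕ) : 0 ≤ dens S n := by
  unfold dens; positivity

lemma dens_le_one (S : Set ℕ) (n : ℕ) : dens S n ≤ 1 := by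
  unfold dens
  rw [div_le_one (by positivity)]
  have := Finset.card_filter_le (Finset.range (n + 1)) (fun i => i ∈ S)
  calc ((((Finset.range (n + 1)).filter (fun i => i ∈ S)).card : ℝ))
      ≤ ((Finset.range (n + 1)).card : ℝ) := by exact_mod_cast this
    _ = (n : ℝ) + 1 := by simp
    _ ≤ (n : ℝ) + 1 := le_rfl

lemma bddAbove (S : Set ℕ) : IsBoundedUnder (· ≤ ·) atTop (dens S) :=
  Filter.isBoundedUnder_of ⟨1, dens_le_one S⟩

lemma bddBelow (S : Set ℕ) : IsBoundedUnder (· ≥ ·) atTop (dens S) :=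
  Filter.isBoundedUnder_of ⟨0, dens_nonneg S⟩

lemma uD_eq (S : Set ℕ) : upperDensity S = atTop.limsup (dens S) := rfl

lemma dens_mono {S S' : Set ℕ} (h : S ⊆ S') (n : ℕ) : dens S n ≤ dens S' n := by
  unfold dens
  have hc : ((Finset.range (n + 1)).filter (fun i => i ∈ S)).card
      ≤ ((Finset.range (n + 1)).filter (fun i => i ∈ S')).card := by
    refine Finset.card_le_card (fun i hi => ?_)
    simp only [Finset.mem_filter] at hi ⊢
    exact ⟨hi.1, h hi.2⟩
  exact div_le_div_of_nonneg_right (by exact_mod_cast hc) (by positivity)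

lemma uD_mono {S S' : Set ℕ} (h : S ⊆ S') : upperDensity S ≤ upperDensity S' := by
  rw [uD_eq, uD_eq]
  exact Filter.limsup_le_limsup (Filter.Eventually.of_forall (dens_mono h))
    ((bddBelow S).isCoboundedUnder_le) (bddAbove S')

lemma uD_le_one (S : Set ℕ) : upperDensity S ≤ 1 := by
  rw [uD_eq]
  exact Filter.limsup_le_of_le ((bddBelow S).isCoboundedUnder_le)
    (Filter.Eventually.of_forall (dens_le_one S))

lemma uD_nonneg (S : Set ℕ) : 0 ≤ upperDensity S := by
  rw [uD_eq]
  exact Filter.le_limsup_of_frequently_le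
    (Filter.Frequently.of_forall (dens_nonneg S)) (bddAbove S)

lemma dens_union (S S' : Set ℕ) (n : ℕ) : dens (S ∪ S') n ≤ dens S n + dens S' n := by
  unfold dens
  rw [← add_div]
  refine div_le_div_of_nonneg_right ?_ (by positivity)
  rw [← Nat.cast_add, Nat.cast_le]
  refine le_trans (Finset.card_le_card (fun i hi => ?_)) (Finset.card_union_le _ _)
  simp only [Finset.mem_filter, Finset.mem_union, Set.mem_union] at hi ⊢
  tauto

lemma uD_union (S S' : Set ℕ) :
    upperDensity (S ∪ S') ≤ upperDensity S + upperDensity S' := by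
  rw [uD_eq, uD_eq, uD_eq]
  calc atTop.limsup (dens (S ∪ S'))
      ≤ atTop.limsup (dens S + dens S') := Filter.limsup_le_limsup
        (Filter.Eventually.of_forall (dens_union S S'))
        ((bddBelow _).isCoboundedUnder_le)
        (Filter.isBoundedUnder_of ⟨2, fun n => by
          have h1 := dens_le_one S n; have h2 := dens_le_one S' n
          simp only [Pi.add_apply]; linarith⟩)
    _ ≤ _ := limsup_add_le (bddBelow S) (bddAbove S)
        ((bddBelow S').isCoboundedUnder_le) (bddAbove S')

variable {X : Type*} [MetricSpace X] (T : X → X)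

def besiSet (x y : X) : Set ℝ :=
  {δ : ℝ | 0 < δ ∧ upperDensity {i : ℕ | δ < dist (T^[i] x) (T^[i] y)} < δ}

lemma besiSet_nonempty (x y : X) : (besiSet T x y).Nonempty :=
  ⟨2, two_pos, lt_of_le_of_lt (uD_le_one _) one_lt_two⟩

lemma besiSet_bddBelow (x y : X) : BddBelow (besiSet T x y) :=
  ⟨0, fun δ hδ => hδ.1.le⟩

lemma besi_eq (x y : X) : besicovitch T x y = sInf (besiSet T x y) := rfl

lemma besi_nonneg (x y : X) : 0 ≤ besicovitch T x y :=
  le_csInf (besiSet_nonempty T x y) (fun δ hδ => hδ.1.le)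

lemma mem_besiSet_of_lt {x y : X} {δ : ℝ} (h : besicovitch T x y < δ) :
    δ ∈ besiSet T x y := by
  obtain ⟨δ0, hδ0, hlt⟩ := exists_lt_of_csInf_lt (besiSet_nonempty T x y) h
  refine ⟨hδ0.1.trans hlt, ?_⟩
  calc upperDensity {i : ℕ | δ < dist (T^[i] x) (T^[i] y)}
      ≤ upperDensity {i : ℕ | δ0 < dist (T^[i] x) (T^[i] y)} :=
        uD_mono (fun i hi => lt_trans hlt hi)
    _ < δ0 := hδ0.2
    _ < δ := hlt

lemma besi_symm (x y : X) : besicovitch T x y = besicovitch T y x := by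
  unfold besicovitch
  simp only [dist_comm]

lemma besi_triangle (x y z : X) :
    besicovitch T x z ≤ besicovitch T x y + besicovitch T y z := by
  refine le_of_forall_pos_le_add (fun η hη => ?_)
  set δ1 := besicovitch T x y + η / 2 with hδ1
  set δ2 := besicovitch T y z + η / 2 with hδ2
  have h1 : δ1 ∈ besiSet T x y := mem_besiSet_of_lt T (by simp [hδ1]; linarith)
  have h2 : δ2 ∈ besiSet T y z := mem_besiSet_of_lt T (by simp [hδ2]; linarith)
  have hsub : {i : ℕ | δ1 + δ2 < dist (T^[i] x) (T^[i] z)}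
      ⊆ {i : ℕ | δ1 < dist (T^[i] x) (T^[i] y)} ∪ {i : ℕ | δ2 < dist (T^[i] y) (T^[i] z)} := by
    intro i hi
    by_contra hc
    simp only [Set.mem_union, Set.mem_setOf_eq, not_or, not_lt] at hc
    have := dist_triangle (T^[i] x) (T^[i] y) (T^[i] z)
    have hi' : δ1 + δ2 < dist (T^[i] x) (T^[i] z) := hi
    linarith [hc.1, hc.2]
  have hmem : δ1 + δ2 ∈ besiSet T x z := by
    refine ⟨by linarith [h1.1, h2.1], ?_⟩
    calc upperDensity {i : ℕ | δ1 + δ2 < dist (T^[i] x) (T^[i] z)}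
        ≤ upperDensity ({i : ℕ | δ1 < dist (T^[i] x) (T^[i] y)} ∪
            {i : ℕ | δ2 < dist (T^[i] y) (T^[i] z)}) := uD_mono hsub
      _ ≤ _ := uD_union _ _
      _ < δ1 + δ2 := add_lt_add h1.2 h2.2
  have := csInf_le (besiSet_bddBelow T x z) hmem
  rw [besi_eq]
  calc sInf (besiSet T x z) ≤ δ1 + δ2 := this
    _ = besicovitch T x y + besicovitch T y z + η := by rw [hδ1, hδ2]; ring

end BesiAux

open BesiAux in
theorem meanSensitive_ball_null {X : Type*} [MetricSpace X] [CompactSpace X]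
    [MeasurableSpace X] [BorelSpace X]
    (T : X → X) (hT : Continuous T) (μ : Measure X) [IsProbabilityMeasure μ]
    (hErg : Ergodic T μ) (ε : ℝ) (hε : 0 < ε)
    (hsen : ∀ A : Set X, MeasurableSet A → 0 < μ A →
      ∃ x ∈ A, ∃ y ∈ A, ε < besicovitch T x y) :
    ∀ᵐ x ∂μ, μ {y : X | besicovitch T x y ≤ ε / 3} = 0 := by
  refine MeasureTheory.ae_of_all μ (fun x => ?_)
  set B : Set X := {y : X | besicovitch T x y ≤ ε / 3} with hB
  -- B is measurable
  have hBeq : B = ⋂ q : {q : ℚ // ε / 3 < (q : ℝ)},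
      {y : X | upperDensity {i : ℕ | (q : ℝ) < dist (T^[i] x) (T^[i] y)} < (q : ℝ)} := by
    ext y
    simp only [hB, Set.mem_setOf_eq, Set.mem_iInter]
    constructor
    · intro h q
      exact (mem_besiSet_of_lt T (lt_of_le_of_lt h q.2)).2
    · intro h
      by_contra hc
      push_neg at hc
      obtain ⟨q, hq1, hq2⟩ := exists_rat_btwn hc
      have hqpos : (0 : ℝ) < q := lt_trans (by linarith) hq1
      have hmem : (q : ℝ) ∈ besiSet T x y := ⟨hqpos, h ⟨q, hq1⟩⟩
      exact absurd (csInf_le (besiSet_bddBelow T x y) hmem) (not_le.mpr hq2)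
  have hmeasB : MeasurableSet B := by
    rw [hBeq]
    refine MeasurableSet.iInter (fun q => ?_)
    have hmf : Measurable fun y =>
        upperDensity {i : ℕ | (q : ℝ) < dist (T^[i] x) (T^[i] y)} := by
      have : (fun y => upperDensity {i : ℕ | (q : ℝ) < dist (T^[i] x) (T^[i] y)})
          = fun y => atTop.limsup (fun n => dens {i : ℕ | (q : ℝ) < dist (T^[i] x) (T^[i] y)} n) := rfl
      rw [this]
      refine Measurable.limsup (fun n => ?_)
      have hcard : ∀ y : X, dens {i : ℕ | (q : ℝ) < dist (T^[i] x) (T^[i] y)} n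
          = (∑ i ∈ Finset.range (n + 1),
              if (q : ℝ) < dist (T^[i] x) (T^[i] y) then (1 : ℝ) else 0) / (n + 1) := by
        intro y
        unfold dens
        congr 1
        rw [Finset.card_filter]
        push_cast
        rfl
      simp only [hcard]
      refine Measurable.div ?_ measurable_const
      refine Finset.measurable_sum _ (fun i _ => ?_)
      have hcont : Continuous fun y => dist (T^[i] x) (T^[i] y) :=
        continuous_const.dist (hT.iterate i)
      exact Measurable.ite (measurableSet_lt measurable_const hcont.measurable)
        measurable_const measurable_const
    exact measurableSet_lt hmf measurable_const
  -- positive measure leads to contradiction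
  by_contra hpos
  have hpos' : 0 < μ B := pos_iff_ne_zero.mpr hpos
  obtain ⟨y, hy, z, hz, hyz⟩ := hsen B hmeasB hpos'
  have h1 : besicovitch T x y ≤ ε / 3 := hy
  have h2 : besicovitch T x z ≤ ε / 3 := hz
  have : besicovitch T y z ≤ besicovitch T y x + besicovitch T x z := besi_triangle T y x z
  rw [← besi_symm T x y] at this
  linarith
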